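/- The assignment (n, m) ↦ [β]^n * [α]^m defines a group isomorphism from ℤ × ℤ (under componentwise addition) onto π₁(S¹ × S¹, (1,1)). -/

import Mathlib

attribute [local instance] Path.Homotopic.setoid

/-- The standard loop in the circle based at `1`, given by `t ↦ exp (2 π i t)`. -/
noncomputable def circleLoop : Path (1 : Circle) 1 where
  toFun t := Circle.exp (2 * Real.pi * t)
  continuous_toFun := Circle.exp.continuous.comp (continuous_const.mul continuous_subtype_val)
  source' := by simp
  target' := by simp

/-- The loop `α` in the torus based at `(1, 1)`, given by `t ↦ (exp (2 π i t), 1)`. -/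
noncomputable def torusLoopA : Path ((1 : Circle), (1 : Circle)) ((1 : Circle), (1 : Circle)) :=
  circleLoop.prod (Path.refl (1 : Circle))

/-- The loop `β` in the torus based at `(1, 1)`, given by `t ↦ (1, exp (2 π i t))`. -/
noncomputable def torusLoopB : Path ((1 : Circle), (1 : Circle)) ((1 : Circle), (1 : Circle)) :=
  (Path.refl (1 : Circle)).prod circleLoop

/-- The homotopy class of `α` in the fundamental group of the torus. -/
noncomputable def torusClassA : FundamentalGroup (Circle × Circle) ((1 : Circle), (1 : Circle)) :=
  FundamentalGroup.fromPath (X := TopCat.of (Circle × Circle)) ⟦torusLoopA⟧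

/-- The homotopy class of `β` in the fundamental group of the torus. -/
noncomputable def torusClassB : FundamentalGroup (Circle × Circle) ((1 : Circle), (1 : Circle)) :=
  FundamentalGroup.fromPath (X := TopCat.of (Circle × Circle)) ⟦torusLoopB⟧

noncomputable section CircleDegAux

open unitInterval Set Complex

lemma circle_mem_slitPlane {v : Circle} (hv : (v : ℂ) ≠ -1) : (v : ℂ) ∈ Complex.slitPlane := by
  rw [Complex.mem_slitPlane_iff]
  by_contra h
  push_neg at h
  obtain ⟨h1, h2⟩ := h
  apply hv
  have habs : ‖(v : ℂ)‖ = 1 := Circle.norm_coe v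
  have hre : (v : ℂ) = ((v : ℂ).re : ℂ) := by
    apply Complex.ext <;> simp [h2]
  rw [hre] at habs ⊢
  rw [Complex.norm_real, Real.norm_eq_abs] at habs
  have : (v : ℂ).re = -1 := by cases abs_cases (v : ℂ).re <;> linarith
  rw [this]
  norm_num

lemma circle_ne_neg_of_dist_lt {v w : Circle} (h : dist v w < 2) :
    ((v / w : Circle) : ℂ) ≠ -1 := by
  intro he
  have hw : (w : ℂ) ≠ 0 := Circle.coe_ne_zero w
  have hv : (v : ℂ) = -(w : ℂ) := by
    have := congrArg (· * (w : ℂ)) he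
    simpa [Circle.coe_div, div_mul_cancel₀ _ hw] using this
  have : dist v w = 2 := by
    rw [show dist v w = dist (v : ℂ) (w : ℂ) from rfl, dist_eq_norm, hv]
    have : -(w : ℂ) - w = (-2 : ℂ) * w := by ring
    rw [this, norm_mul]
    simp [Circle.norm_coe]
  linarith

lemma circle_slit_of_dist_lt {v w : Circle} (h : dist v w < 2) :
    ((v / w : Circle) : ℂ) ∈ Complex.slitPlane :=
  circle_mem_slitPlane (circle_ne_neg_of_dist_lt h)

lemma circle_exp_sum (s : Finset ℕ) (f : ℕ → ℝ) :
    Circle.exp (∑ j ∈ s, f j) = ∏ j ∈ s, Circle.exp (f j) := by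
  induction s using Finset.cons_induction with
  | empty => simp
  | cons j s hj ih => rw [Finset.sum_cons, Finset.prod_cons, Circle.exp_add, ih]

lemma exists_circle_lift (γ : I → Circle) (hγ : Continuous γ) (a : ℝ)
    (ha : Circle.exp a = γ 0) :
    ∃ f : I → ℝ, Continuous f ∧ f 0 = a ∧ ∀ t, Circle.exp (f t) = γ t := by
  set c : ℝ → I := Set.projIcc 0 1 zero_le_one with hc
  have hcont_c : Continuous c := continuous_projIcc
  set g : ℝ → Circle := γ ∘ c with hgdef
  have hgcont : Continuous g := hγ.comp hcont_c
  have hlip : ∀ s t : ℝ, dist (c s) (c t) ≤ dist s t := by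
    intro s t
    rw [Subtype.dist_eq]
    show dist (max 0 (min 1 s)) (max 0 (min 1 t)) ≤ dist s t
    rw [Real.dist_eq, Real.dist_eq]
    calc |max 0 (min 1 s) - max 0 (min 1 t)|
        = |max (min 1 s) 0 - max (min 1 t) 0| := by rw [max_comm, max_comm (min 1 t)]
      _ ≤ |min 1 s - min 1 t| := abs_max_sub_max_le_abs _ _ _
      _ = |min s 1 - min t 1| := by rw [min_comm, min_comm (1:ℝ)]
      _ ≤ max |s - t| |1 - 1| := abs_min_sub_min_le_max _ _ _ _
      _ ≤ |s - t| := by simp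
  have hγu : UniformContinuous γ := CompactSpace.uniformContinuous_of_continuous hγ
  obtain ⟨δ, hδpos, hδ⟩ := Metric.uniformContinuous_iff.mp hγu 2 two_pos
  obtain ⟨n, hn⟩ := exists_nat_one_div_lt hδpos
  set N : ℕ := n + 1 with hNdef
  have hN0 : 0 < (N : ℝ) := by positivity
  have key : ∀ s t : ℝ, |s - t| ≤ 1 / N → dist (g s) (g t) < 2 := by
    intro s t hst
    apply hδ
    calc dist (c s) (c t) ≤ dist s t := hlip s t
      _ ≤ 1 / N := by rwa [Real.dist_eq]
      _ < δ := by exact_mod_cast hn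
  set q : ℕ → ℝ → ℝ := fun j t => max ((j : ℝ) / N) (min t ((j + 1) / N)) with hq
  have hq_lb : ∀ (j : ℕ) (t : ℝ), (j : ℝ) / N ≤ q j t := fun j t => le_max_left _ _
  have hq_ub : ∀ (j : ℕ) (t : ℝ), q j t ≤ ((j : ℝ) + 1) / N := by
    intro j t
    apply max_le
    · gcongr
      linarith
    · exact min_le_right _ _
  have hq_dist : ∀ (j : ℕ) (t : ℝ), |q j t - (j : ℝ) / N| ≤ 1 / N := by
    intro j t
    rw [abs_le]
    have h1N : (0:ℝ) < 1 / N := by positivity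
    constructor
    · have := hq_lb j t; linarith
    · have := hq_ub j t
      have : q j t - (j : ℝ) / N ≤ ((j : ℝ) + 1) / N - (j : ℝ) / N := by linarith
      calc q j t - (j : ℝ) / N ≤ ((j : ℝ) + 1) / N - (j : ℝ) / N := this
        _ = 1 / N := by field_simp; ring
  have hslit : ∀ (j : ℕ) (t : ℝ),
      ((g (q j t) / g ((j : ℝ) / N) : Circle) : ℂ) ∈ Complex.slitPlane :=
    fun j t => circle_slit_of_dist_lt (key _ _ (hq_dist j t))
  set F : ℝ → ℝ := fun t =>
    a + ∑ j ∈ Finset.range N, Complex.arg ((g (q j t) / g ((j : ℝ) / N) : Circle) : ℂ) with hF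
  have hqcont : ∀ j : ℕ, Continuous fun t => q j t := by
    intro j
    exact continuous_const.max ((continuous_id.min continuous_const))
  have hFcont : Continuous F := by
    apply continuous_const.add
    apply continuous_finset_sum
    intro j _
    have h1 : Continuous fun t => ((g (q j t) / g ((j : ℝ) / N) : Circle) : ℂ) :=
      continuous_subtype_val.comp ((hgcont.comp (hqcont j)).div' continuous_const)
    rw [continuous_iff_continuousAt]
    intro t
    show ContinuousAt (Complex.arg ∘ fun t => ((g (q j t) / g ((j : ℝ) / N) : Circle) : ℂ)) t
    exact ContinuousAt.comp (Complex.continuousAt_arg (hslit j t)) h1.continuousAt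
  have hF0 : F 0 = a := by
    rw [hF]
    simp only
    rw [Finset.sum_eq_zero, add_zero]
    intro j _
    have : q j 0 = (j : ℝ) / N := by
      rw [hq]
      simp only
      rw [min_eq_left (by positivity), max_eq_left (by positivity)]
    rw [this]
    simp
  have hFexp : ∀ t : ℝ, 0 ≤ t → t ≤ 1 → Circle.exp (F t) = g t := by
    intro t ht0 ht1
    rw [hF]
    simp only
    rw [Circle.exp_add, circle_exp_sum]
    have hterm : ∀ j ∈ Finset.range N, Circle.exp (Complex.arg
        ((g (q j t) / g ((j : ℝ) / N) : Circle) : ℂ)) =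
        g (min t (((j : ℕ) + 1 : ℝ) / N)) / g (min t ((j : ℝ) / N)) := by
      intro j _
      rw [Circle.exp_arg]
      rcases le_total t ((j : ℝ) / N) with h | h
      · have h1 : min t ((j : ℝ) / N) = t := min_eq_left h
        have h2 : min t (((j : ℝ) + 1) / N) = t := min_eq_left (h.trans (by gcongr; linarith))
        have h3 : q j t = (j : ℝ) / N := by
          rw [hq]; simp only
          rw [h2, max_eq_left h]
        rw [h3, h1, h2]
        simp
      · have h1 : min t ((j : ℝ) / N) = (j : ℝ) / N := min_eq_right h
        have h3 : q j t = min t (((j : ℝ) + 1) / N) := by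
          rw [hq]; simp only
          exact max_eq_right (le_min h (by gcongr; linarith))
        rw [h3, h1]
    rw [Finset.prod_congr rfl hterm]
    have htel := Finset.prod_range_div (fun j : ℕ => g (min t ((j : ℝ) / N))) N
    simp only [Nat.cast_add, Nat.cast_one] at htel
    rw [htel]
    have hN1 : ((N : ℝ)) / N = 1 := div_self hN0.ne'
    rw [hN1, min_eq_left ht1, Nat.cast_zero, zero_div, min_eq_right ht0]
    have hg0 : g 0 = γ 0 := by
      rw [hgdef]
      simp only [Function.comp_apply]
      congr 1
      exact Subtype.ext (by simp [hc, Set.projIcc])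
    rw [hg0, ← ha]
    rw [mul_div_assoc']
    exact mul_div_cancel_left _ _
  refine ⟨fun t => F t, hFcont.comp continuous_subtype_val, ?_, ?_⟩
  · show F ((0 : I) : ℝ) = a
    rw [show ((0 : I) : ℝ) = 0 from rfl, hF0]
  · intro t
    rw [hFexp t t.2.1 t.2.2]
    rw [hgdef]
    simp only [Function.comp_apply]
    congr 1
    rw [hc]
    exact Set.projIcc_val zero_le_one t

lemma circle_lift_unique {f₁ f₂ : I → ℝ} (h₁ : Continuous f₁) (h₂ : Continuous f₂)
    (h : ∀ t, Circle.exp (f₁ t) = Circle.exp (f₂ t)) (h0 : f₁ 0 = f₂ 0) : f₁ = f₂ :=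
  (T2Space.isSeparatedMap (Circle.exp : ℝ → Circle)).eq_of_comp_eq
    isLocalHomeomorph_circleExp.isLocallyInjective h₁ h₂ (funext h) 0 h0

/-- The canonical lift data for a loop at `1` in the circle. -/
def loopLiftSpec (γ : Path (1 : Circle) 1) :
    ∃ f : I → ℝ, Continuous f ∧ f 0 = 0 ∧ ∀ t, Circle.exp (f t) = γ t :=
  exists_circle_lift γ γ.continuous 0 (by rw [Circle.exp_zero, γ.source])

/-- The canonical lift of a loop at `1` in the circle, starting at `0`. -/
def llift (γ : Path (1 : Circle) 1) : I → ℝ := (loopLiftSpec γ).choose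

lemma llift_continuous (γ : Path (1 : Circle) 1) : Continuous (llift γ) :=
  (loopLiftSpec γ).choose_spec.1

lemma llift_zero (γ : Path (1 : Circle) 1) : llift γ 0 = 0 :=
  (loopLiftSpec γ).choose_spec.2.1

lemma llift_exp (γ : Path (1 : Circle) 1) (t : I) : Circle.exp (llift γ t) = γ t :=
  (loopLiftSpec γ).choose_spec.2.2 t

lemma llift_eq (γ : Path (1 : Circle) 1) {f : I → ℝ} (hf : Continuous f) (h0 : f 0 = 0)
    (he : ∀ t, Circle.exp (f t) = γ t) : llift γ = f :=
  circle_lift_unique (llift_continuous γ) hf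
    (fun t => by rw [llift_exp, he]) (by rw [llift_zero, h0])

/-- The (real-valued, `2π`-rescaled) degree of a loop at `1` in the circle. -/
def pdeg (γ : Path (1 : Circle) 1) : ℝ := llift γ 1

lemma pdeg_refl : pdeg (Path.refl (1 : Circle)) = 0 := by
  have : llift (Path.refl (1 : Circle)) = fun _ => (0 : ℝ) :=
    llift_eq _ continuous_const rfl (fun t => by simp)
  rw [pdeg, this]

lemma pdeg_int (γ : Path (1 : Circle) 1) : ∃ k : ℤ, pdeg γ = k * (2 * Real.pi) := by
  have h1 : Circle.exp (pdeg γ) = Circle.exp 0 := by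
    rw [pdeg, llift_exp, γ.target, Circle.exp_zero]
  obtain ⟨m, hm⟩ := Circle.exp_eq_exp.mp h1
  exact ⟨m, by linarith⟩

lemma pdeg_circleLoop : pdeg circleLoop = 2 * Real.pi := by
  have : llift circleLoop = fun t : I => 2 * Real.pi * (t : ℝ) := by
    apply llift_eq
    · exact continuous_const.mul continuous_subtype_val
    · simp
    · intro t; rfl
  rw [pdeg, this]
  norm_num

lemma pdeg_close {γ₁ γ₂ : Path (1 : Circle) 1}
    (h : ∀ t, dist (γ₂ t) (γ₁ t) < 2) : pdeg γ₂ = pdeg γ₁ := by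
  have hslit : ∀ t : I, ((γ₂ t / γ₁ t : Circle) : ℂ) ∈ Complex.slitPlane :=
    fun t => circle_slit_of_dist_lt (h t)
  set f : I → ℝ := fun t => llift γ₁ t + Complex.arg ((γ₂ t / γ₁ t : Circle) : ℂ) with hf
  have hfc : Continuous f := by
    apply (llift_continuous γ₁).add
    have h1 : Continuous fun t : I => ((γ₂ t / γ₁ t : Circle) : ℂ) :=
      continuous_subtype_val.comp (γ₂.continuous.div' γ₁.continuous)
    rw [continuous_iff_continuousAt]
    intro t
    show ContinuousAt (Complex.arg ∘ fun t : I => ((γ₂ t / γ₁ t : Circle) : ℂ)) t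
    exact ContinuousAt.comp (Complex.continuousAt_arg (hslit t)) h1.continuousAt
  have hf0 : f 0 = 0 := by
    rw [hf]
    simp [llift_zero]
  have hfe : ∀ t, Circle.exp (f t) = γ₂ t := by
    intro t
    rw [hf]
    simp only
    rw [Circle.exp_add, llift_exp, Circle.exp_arg, mul_div_assoc']
    exact mul_div_cancel_left _ _
  have : llift γ₂ = f := llift_eq _ hfc hf0 hfe
  rw [pdeg, pdeg, this, hf]
  simp

lemma pdeg_homotopic {γ₁ γ₂ : Path (1 : Circle) 1} (h : γ₁.Homotopic γ₂) :
    pdeg γ₁ = pdeg γ₂ := by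
  obtain ⟨H⟩ := h
  have hu : UniformContinuous ⇑H.toHomotopy.toContinuousMap :=
    CompactSpace.uniformContinuous_of_continuous H.continuous
  obtain ⟨δ, hδpos, hδ⟩ := Metric.uniformContinuous_iff.mp hu 2 two_pos
  set d : I → ℝ := fun s => pdeg (H.eval s) with hd
  have hlc : IsLocallyConstant d := by
    rw [IsLocallyConstant.iff_eventually_eq]
    intro s₀
    rw [Metric.eventually_nhds_iff]
    refine ⟨δ, hδpos, fun {s} hs => ?_⟩
    apply pdeg_close
    intro t
    apply hδ
    rw [Prod.dist_eq]
    simpa [max_eq_left dist_nonneg] using hs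
  have := hlc.apply_eq_of_preconnectedSpace 0 1
  rw [hd] at this
  simpa using this

lemma pdeg_trans (γ₁ γ₂ : Path (1 : Circle) 1) :
    pdeg (γ₁.trans γ₂) = pdeg γ₁ + pdeg γ₂ := by
  set c : ℝ → I := Set.projIcc 0 1 zero_le_one with hc
  set f : I → ℝ := fun t => if (t : ℝ) ≤ 1 / 2 then llift γ₁ (c (2 * t))
    else pdeg γ₁ + llift γ₂ (c (2 * t - 1)) with hf
  have hfc : Continuous f := by
    apply Continuous.if_le
    · exact (llift_continuous γ₁).comp (continuous_projIcc.comp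
        (continuous_const.mul continuous_subtype_val))
    · exact continuous_const.add ((llift_continuous γ₂).comp (continuous_projIcc.comp
        ((continuous_const.mul continuous_subtype_val).sub continuous_const)))
    · exact continuous_subtype_val
    · exact continuous_const
    · intro t ht
      have h2 : (2 : ℝ) * t = 1 := by rw [ht]; norm_num
      have h3 : (2 : ℝ) * t - 1 = 0 := by rw [h2]; ring
      rw [h3, h2]
      have hc1 : c 1 = 1 := Subtype.ext (by simp [hc, Set.projIcc])
      have hc0 : c 0 = 0 := Subtype.ext (by simp [hc, Set.projIcc])
      rw [hc1, hc0, llift_zero]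
      show pdeg γ₁ = pdeg γ₁ + 0
      ring
  have hf0 : f 0 = 0 := by
    rw [hf]
    simp only
    rw [if_pos (by norm_num : ((0 : I) : ℝ) ≤ 1 / 2)]
    have : c (2 * ((0 : I) : ℝ)) = 0 := Subtype.ext (by simp [hc, Set.projIcc])
    rw [this, llift_zero]
  have hfe : ∀ t, Circle.exp (f t) = (γ₁.trans γ₂) t := by
    intro t
    rw [Path.trans_apply, hf]
    simp only
    split_ifs with h
    · have hmem : 2 * (t : ℝ) ∈ Set.Icc (0 : ℝ) 1 :=
        ⟨mul_nonneg (by norm_num) t.2.1, by linarith⟩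
      have : c (2 * (t : ℝ)) = ⟨2 * (t : ℝ), hmem⟩ := Set.projIcc_of_mem _ hmem
      rw [this, llift_exp]
    · push_neg at h
      have hmem : 2 * (t : ℝ) - 1 ∈ Set.Icc (0 : ℝ) 1 :=
        ⟨by linarith, by have := t.2.2; linarith⟩
      have : c (2 * (t : ℝ) - 1) = ⟨2 * (t : ℝ) - 1, hmem⟩ := Set.projIcc_of_mem _ hmem
      rw [this, Circle.exp_add, llift_exp]
      rw [pdeg, llift_exp, γ₁.target, one_mul]
  have : llift (γ₁.trans γ₂) = f := llift_eq _ hfc hf0 hfe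
  rw [pdeg, this, hf]
  simp only
  rw [if_neg (by norm_num : ¬((1 : I) : ℝ) ≤ 1 / 2)]
  have : c (2 * ((1 : I) : ℝ) - 1) = 1 := Subtype.ext (by simp [hc, Set.projIcc]; norm_num)
  rw [this]
  rfl

lemma nullhomotopic_of_pdeg_zero {γ : Path (1 : Circle) 1} (h : pdeg γ = 0) :
    γ.Homotopic (Path.refl 1) := by
  refine ⟨{ toFun := fun p => Circle.exp ((1 - (p.1 : ℝ)) * llift γ p.2)
            continuous_toFun := ?_
            map_zero_left := ?_
            map_one_left := ?_
            prop' := ?_ }⟩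
  · exact Circle.exp.continuous.comp
      (((continuous_const.sub (continuous_subtype_val.comp continuous_fst)).mul
        ((llift_continuous γ).comp continuous_snd)))
  · intro t
    simp [llift_exp]
  · intro t
    simp
  · intro s t ht
    simp only [Set.mem_insert_iff, Set.mem_singleton_iff] at ht
    rcases ht with rfl | rfl
    · simp [llift_zero]
    · have : llift γ 1 = 0 := h
      simp [this]


/-- Degree on homotopy classes of loops. -/
def qdeg : Path.Homotopic.Quotient (1 : Circle) 1 → ℝ :=
  Quotient.lift pdeg fun _ _ h => pdeg_homotopic h

@[simp] lemma qdeg_mk (γ : Path (1 : Circle) 1) : qdeg ⟦γ⟧ = pdeg γ := rfl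

lemma qdeg_comp (p q : Path.Homotopic.Quotient (1 : Circle) 1) :
    qdeg (p.trans q) = qdeg p + qdeg q := by
  induction p, q using Quotient.inductionOn₂ with
  | h p q =>
    show pdeg (p.trans q) = pdeg p + pdeg q
    exact pdeg_trans p q

lemma qdeg_refl_of_eq_zero {p : Path.Homotopic.Quotient (1 : Circle) 1} (h : qdeg p = 0) :
    p = ⟦Path.refl 1⟧ := by
  induction p using Quotient.inductionOn with
  | h γ => exact Quotient.sound (nullhomotopic_of_pdeg_zero h)

lemma qdeg_int (p : Path.Homotopic.Quotient (1 : Circle) 1) :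
    ∃ k : ℤ, qdeg p = k * (2 * Real.pi) := by
  induction p using Quotient.inductionOn with
  | h γ => exact pdeg_int γ

lemma projLeft_comp {A B : Type*} [TopologicalSpace A] [TopologicalSpace B]
    {c₁ c₂ c₃ : A × B} (p : Path.Homotopic.Quotient c₁ c₂) (q : Path.Homotopic.Quotient c₂ c₃) :
    Path.Homotopic.projLeft (p.trans q) =
      (Path.Homotopic.projLeft p).trans (Path.Homotopic.projLeft q) := by
  induction p, q using Quotient.inductionOn₂ with
  | h p q =>
    exact congrArg Path.Homotopic.Quotient.mk (Path.map_trans p q continuous_fst)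

lemma projRight_comp {A B : Type*} [TopologicalSpace A] [TopologicalSpace B]
    {c₁ c₂ c₃ : A × B} (p : Path.Homotopic.Quotient c₁ c₂) (q : Path.Homotopic.Quotient c₂ c₃) :
    Path.Homotopic.projRight (p.trans q) =
      (Path.Homotopic.projRight p).trans (Path.Homotopic.projRight q) := by
  induction p, q using Quotient.inductionOn₂ with
  | h p q =>
    exact congrArg Path.Homotopic.Quotient.mk (Path.map_trans p q continuous_snd)

/-- The pair of degrees of the two projections of a torus loop class. -/
def DD (g : FundamentalGroup (Circle × Circle) ((1 : Circle), (1 : Circle))) : ℝ × ℝ :=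
  (qdeg (Path.Homotopic.projRight
      (FundamentalGroup.toPath (X := TopCat.of (Circle × Circle)) g)),
   qdeg (Path.Homotopic.projLeft
      (FundamentalGroup.toPath (X := TopCat.of (Circle × Circle)) g)))

lemma DD_mul (g h : FundamentalGroup (Circle × Circle) ((1 : Circle), (1 : Circle))) :
    DD (g * h) = DD g + DD h := by
  have hmul : FundamentalGroup.toPath (X := TopCat.of (Circle × Circle)) (g * h) =
      (FundamentalGroup.toPath (X := TopCat.of (Circle × Circle)) h).trans
        (FundamentalGroup.toPath (X := TopCat.of (Circle × Circle)) g) := rfl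
  rw [DD, DD, DD, hmul, projLeft_comp, projRight_comp, qdeg_comp, qdeg_comp, Prod.mk_add_mk]
  exact Prod.ext (add_comm _ _) (add_comm _ _)

lemma DD_one : DD 1 = 0 := by
  have h1 : FundamentalGroup.toPath (X := TopCat.of (Circle × Circle))
      (1 : FundamentalGroup (Circle × Circle) ((1 : Circle), (1 : Circle))) =
      ⟦Path.refl ((1 : Circle), (1 : Circle))⟧ := rfl
  rw [DD, h1]
  have hL : Path.Homotopic.projLeft (⟦Path.refl ((1 : Circle), (1 : Circle))⟧ :
      Path.Homotopic.Quotient _ _) = ⟦Path.refl (1 : Circle)⟧ := rfl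
  have hR : Path.Homotopic.projRight (⟦Path.refl ((1 : Circle), (1 : Circle))⟧ :
      Path.Homotopic.Quotient _ _) = ⟦Path.refl (1 : Circle)⟧ := rfl
  rw [hL, hR, qdeg_mk, pdeg_refl]
  rfl

lemma DD_eq_one_of {k : FundamentalGroup (Circle × Circle) ((1 : Circle), (1 : Circle))}
    (h : DD k = 0) : k = 1 := by
  rw [DD, Prod.mk_eq_zero] at h
  have hR := qdeg_refl_of_eq_zero h.1
  have hL := qdeg_refl_of_eq_zero h.2
  have hhom : FundamentalGroup.toPath (X := TopCat.of (Circle × Circle)) k =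
      ⟦Path.refl ((1 : Circle), (1 : Circle))⟧ := by
    rw [← Path.Homotopic.prod_projLeft_projRight
      (FundamentalGroup.toPath (X := TopCat.of (Circle × Circle)) k), hL, hR]
    rfl
  exact hhom

lemma DD_inj {g h : FundamentalGroup (Circle × Circle) ((1 : Circle), (1 : Circle))}
    (e : DD g = DD h) : g = h := by
  have hinv : DD h + DD h⁻¹ = 0 := by
    rw [← DD_mul, mul_inv_cancel, DD_one]
  have h0 : DD (g * h⁻¹) = 0 := by
    rw [DD_mul, e]
    exact hinv
  exact mul_inv_eq_one.mp (DD_eq_one_of h0)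

lemma DD_A : DD torusClassA = (0, 2 * Real.pi) := by
  have hhom : FundamentalGroup.toPath (X := TopCat.of (Circle × Circle)) torusClassA =
      ⟦torusLoopA⟧ := rfl
  rw [DD, hhom]
  have hR : Path.Homotopic.projRight (⟦torusLoopA⟧ : Path.Homotopic.Quotient _ _) =
      ⟦Path.refl (1 : Circle)⟧ := rfl
  have hL : Path.Homotopic.projLeft (⟦torusLoopA⟧ : Path.Homotopic.Quotient _ _) =
      ⟦circleLoop⟧ := rfl
  rw [hR, hL, qdeg_mk, qdeg_mk, pdeg_refl, pdeg_circleLoop]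

lemma DD_B : DD torusClassB = (2 * Real.pi, 0) := by
  have hhom : FundamentalGroup.toPath (X := TopCat.of (Circle × Circle)) torusClassB =
      ⟦torusLoopB⟧ := rfl
  rw [DD, hhom]
  have hR : Path.Homotopic.projRight (⟦torusLoopB⟧ : Path.Homotopic.Quotient _ _) =
      ⟦circleLoop⟧ := rfl
  have hL : Path.Homotopic.projLeft (⟦torusLoopB⟧ : Path.Homotopic.Quotient _ _) =
      ⟦Path.refl (1 : Circle)⟧ := rfl
  rw [hR, hL, qdeg_mk, qdeg_mk, pdeg_refl, pdeg_circleLoop]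

/-- `DD` as a monoid hom. -/
def DDhom : FundamentalGroup (Circle × Circle) ((1 : Circle), (1 : Circle)) →*
    Multiplicative (ℝ × ℝ) where
  toFun g := Multiplicative.ofAdd (DD g)
  map_one' := by
    show Multiplicative.ofAdd (DD 1) = 1
    rw [DD_one]; rfl
  map_mul' g h := by
    show Multiplicative.ofAdd (DD (g * h)) = Multiplicative.ofAdd (DD g) * Multiplicative.ofAdd (DD h)
    rw [DD_mul]; rfl

lemma DD_zpow (g : FundamentalGroup (Circle × Circle) ((1 : Circle), (1 : Circle))) (n : ℤ) :
    DD (g ^ n) = n • DD g := by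
  calc DD (g ^ n) = (DDhom (g ^ n)).toAdd := rfl
    _ = ((DDhom g) ^ n).toAdd := by rw [map_zpow]
    _ = n • DD g := by rw [toAdd_zpow]; rfl

lemma DD_F (p : ℤ × ℤ) : DD (torusClassB ^ p.1 * torusClassA ^ p.2) =
    ((p.1 : ℝ) * (2 * Real.pi), (p.2 : ℝ) * (2 * Real.pi)) := by
  rw [DD_mul, DD_zpow, DD_zpow, DD_A, DD_B, Prod.smul_mk, Prod.smul_mk, Prod.mk_add_mk]
  simp [zsmul_eq_mul]

end CircleDegAux

/-- The assignment `(n, m) ↦ [β]^n * [α]^m` defines a group isomorphism from `ℤ × ℤ`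
(under componentwise addition) onto the fundamental group of the torus: it is bijective
and turns addition into multiplication. -/
theorem torus_fundamentalGroup_iso_via_generators :
    Function.Bijective (fun p : ℤ × ℤ => torusClassB ^ p.1 * torusClassA ^ p.2) ∧
      ∀ p q : ℤ × ℤ,
        torusClassB ^ (p + q).1 * torusClassA ^ (p + q).2 =
          (torusClassB ^ p.1 * torusClassA ^ p.2) * (torusClassB ^ q.1 * torusClassA ^ q.2) := by
  have h2π : (2 * Real.pi) ≠ 0 := by positivity
  constructor
  · constructor
    · intro p q hpq
      have h := congrArg DD hpq
      simp only at h
      rw [DD_F, DD_F, Prod.mk.injEq] at h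
      have h1 : (p.1 : ℝ) = q.1 := mul_right_cancel₀ h2π h.1
      have h2 : (p.2 : ℝ) = q.2 := mul_right_cancel₀ h2π h.2
      exact Prod.ext (by exact_mod_cast h1) (by exact_mod_cast h2)
    · intro g
      obtain ⟨k₁, hk₁⟩ := qdeg_int (Path.Homotopic.projRight
        (FundamentalGroup.toPath (X := TopCat.of (Circle × Circle)) g))
      obtain ⟨k₂, hk₂⟩ := qdeg_int (Path.Homotopic.projLeft
        (FundamentalGroup.toPath (X := TopCat.of (Circle × Circle)) g))
      refine ⟨(k₁, k₂), ?_⟩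
      apply DD_inj
      have hF := DD_F (k₁, k₂)
      simp only at hF
      simp only
      rw [hF]
      show _ = DD g
      rw [DD]
      exact Prod.ext hk₁.symm hk₂.symm
  · have hcomm : Commute torusClassB torusClassA :=
      DD_inj (by rw [DD_mul, DD_mul, add_comm])
    intro p q
    have hc2 : (torusClassB ^ q.1) * (torusClassA ^ p.2) =
        (torusClassA ^ p.2) * (torusClassB ^ q.1) := (hcomm.zpow_zpow q.1 p.2).eq
    show torusClassB ^ (p.1 + q.1) * torusClassA ^ (p.2 + q.2) = _
    rw [zpow_add, zpow_add, mul_assoc, ← mul_assoc (torusClassB ^ q.1), hc2,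
      mul_assoc, ← mul_assoc]
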